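/- Suppose λ is a partition with e-core κ and e-weight w, and k ∈ {0,…,e-1}. Then λ is k-empty if and only if λ' is (e-1-k)-empty; and when this holds, 𝔏_k(λ) + 𝔏_{e-1-k}(λ') = 𝔏_k(κ) + 𝔏_{e-1-k}(κ') + w. -/

import Mathlib

open scoped BigOperators

def IsPartition (f : ℕ → ℕ) : Prop :=
  (∀ ⦃i j : ℕ⦄, i ≤ j → f j ≤ f i) ∧ ∃ N : ℕ, ∀ i, N ≤ i → f i = 0

noncomputable def conj (f : ℕ → ℕ) (i : ℕ) : ℕ := Nat.card {j : ℕ // i + 1 ≤ f j}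

def betaSet (f : ℕ → ℕ) (r : ℕ) : Multiset ℕ :=
  (Multiset.range r).map fun i => f i + (r - 1 - i)

/-- e-extension of a multiset: z gets multiplicity |B ∩ {z, z+e, z+2e, …}|. -/
def eExt (e : ℕ) (B : Multiset ℕ) : Multiset ℕ :=
  B.bind fun b => (Multiset.range (b / e + 1)).map fun j => b - j * e

def runnerCount (e d : ℕ) (B : Multiset ℕ) : ℕ :=
  Multiset.card (B.filter fun b => b % e = d)

/-- Beta-multiset of the e-core: slide all beads up their runners. -/
def coreBeta (e : ℕ) (B : Multiset ℕ) : Multiset ℕ :=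
  (Multiset.range e).bind fun j =>
    (Multiset.range (runnerCount e j B)).map fun i => j + i * e

/-- Weight multiset 𝔚: records the start of each single-step slide; equivalently
determined by 𝔛 = 𝔛(core) ⊔ 𝔚. -/
def weightMS (e : ℕ) (B : Multiset ℕ) : Multiset ℕ :=
  eExt e B - eExt e (coreBeta e B)

def eWeight (e : ℕ) (B : Multiset ℕ) : ℕ := Multiset.card (weightMS e B)

def DomMS (I J : Multiset ℕ) : Prop := Multiset.Rel (fun a b => b ≤ a) I J

/-- refined dominance order: same e-core and 𝔛^e_r(g) ⪰ 𝔛^e_r(f). -/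
def Dominates (e r : ℕ) (g f : ℕ → ℕ) : Prop :=
  coreBeta e (betaSet g r) = coreBeta e (betaSet f r) ∧
    DomMS (eExt e (betaSet g r)) (eExt e (betaSet f r))
/-- k-empty: all beads on runner d = (r+k) mod e are as high as possible. -/
def KEmpty (e k r : ℕ) (f : ℕ → ℕ) : Prop :=
  ∀ b ∈ betaSet f r, b % e = (r + k) % e →
    b < (r + k) % e + runnerCount e ((r + k) % e) (betaSet f r) * e

/-- 𝔏_k(λ): number of elements (with multiplicity) of 𝔛^e_r(λ) greater than d + c·e. -/
def Lk (e k r : ℕ) (f : ℕ → ℕ) : ℕ :=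
  Multiset.card <| (eExt e (betaSet f r)).filter fun x =>
    (r + k) % e + runnerCount e ((r + k) % e) (betaSet f r) * e < x

def partOfBeta (C : Multiset ℕ) : ℕ → ℕ := fun i =>
  ((C.sort (· ≤ ·)).reverse.getD i 0) - (Multiset.card C - 1 - i)

namespace Stmt11Aux



/-- reflection-mod helper -/
lemma refl_mod {e K x z : ℕ} (hx : x ≤ K) (hz : z ≤ K) :
    (K - x) % e = (K - z) % e ↔ x % e = z % e := by
  constructor
  · intro h
    have h' : (K - x) + (x + z) ≡ (K - z) + (x + z) [MOD e] := Nat.ModEq.add_right _ h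
    have e1 : (K - x) + (x + z) = K + z := by omega
    have e2 : (K - z) + (x + z) = K + x := by omega
    rw [e1, e2] at h'
    exact (Nat.ModEq.add_left_cancel' K h').symm
  · intro h
    have h' : K + z ≡ K + x [MOD e] := Nat.ModEq.add_left K h.symm
    have e1 : (K - x) + (x + z) = K + z := by omega
    have e2 : (K - z) + (x + z) = K + x := by omega
    have : (K - x) + (x + z) ≡ (K - z) + (x + z) [MOD e] := by rw [e1, e2]; exact h'
    exact Nat.ModEq.add_right_cancel' _ this

lemma dvd_shift {e ρ n : ℕ} (hρ : ρ < e) : e ∣ n + e - ρ ↔ n % e = ρ := by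
  have h1 : ρ ≤ n + e := by omega
  have h2 := Nat.modEq_iff_dvd' (n := e) h1
  constructor
  · intro h
    have : ρ ≡ n + e [MOD e] := h2.mpr h
    have : ρ % e = (n + e) % e := this
    rw [Nat.add_mod_right, Nat.mod_eq_of_lt hρ] at this
    omega
  · intro h
    refine h2.mp ?_
    show ρ % e = (n + e) % e
    rw [Nat.add_mod_right, Nat.mod_eq_of_lt hρ, h]

/-- mod of K - a%e -/
lemma mod_sub_mod {e K a : ℕ} (ha : a ≤ K) : (K - a % e) % e = (K - a) % e := by
  have hm : e * (a / e) + a % e = a := Nat.div_add_mod a e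
  have : K - a % e = (K - a) + e * (a / e) := by omega
  rw [this, Nat.add_mul_mod_self_left]

def slotM (e n ρ : ℕ) : ℕ := (n + e - 1 - ρ) / e

lemma slotM_self {e z : ℕ} (he : 0 < e) : slotM e z (z % e) = z / e := by
  obtain ⟨q, m, hm, hlt, hq⟩ : ∃ q m, e * q + m = z ∧ m < e ∧ q = z / e := by
    exact ⟨z / e, z % e, Nat.div_add_mod z e, Nat.mod_lt _ he, rfl⟩
  have hmod : z % e = m := by
    rw [← hm, Nat.mul_add_mod, Nat.mod_eq_of_lt hlt]
  unfold slotM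
  rw [hmod]
  have h1 : z + e - 1 - m = e * q + (e - 1) := by omega
  rw [h1, Nat.mul_add_div he, Nat.div_eq_of_lt (by omega), hq, Nat.add_zero]

lemma slot_eq {e ρ : ℕ} (he : 0 < e) (hρ : ρ < e) (n : ℕ) :
    (Multiset.range n).filter (fun x => x % e = ρ)
      = (Multiset.range (slotM e n ρ)).map (fun i => ρ + i * e) := by
  induction n with
  | zero =>
      have : slotM e 0 ρ = 0 := by
        unfold slotM; exact Nat.div_eq_of_lt (by omega)
      simp [this]
  | succ n ih =>
      have hsucc : slotM e (n+1) ρ = slotM e n ρ + if e ∣ n + e - ρ then 1 else 0 := by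
        unfold slotM
        have h1 : n + 1 + e - 1 - ρ = (n + e - 1 - ρ) + 1 := by omega
        rw [h1, Nat.succ_div]
        have h2 : n + e - 1 - ρ + 1 = n + e - ρ := by omega
        rw [h2]
      rw [Multiset.range_succ, Multiset.filter_cons]
      by_cases h : n % e = ρ
      · have hdvd : e ∣ n + e - ρ := (dvd_shift hρ).mpr h
        rw [if_pos h]
        have hM : ρ + (slotM e n ρ) * e = n := by
          obtain ⟨q, hm, hq⟩ : ∃ q, e * q + ρ = n ∧ q = n / e := by
            refine ⟨n / e, ?_, rfl⟩
            have := Nat.div_add_mod n e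
            omega
          have hsl : slotM e n ρ = q := by
            unfold slotM
            have h1 : n + e - 1 - ρ = e * q + (e - 1) := by omega
            rw [h1, Nat.mul_add_div he, Nat.div_eq_of_lt (by omega), Nat.add_zero]
          rw [hsl, Nat.mul_comm]; omega
        rw [hsucc, if_pos hdvd, Multiset.range_succ, Multiset.map_cons, hM, ih]
        rfl
      · have hdvd : ¬ e ∣ n + e - ρ := fun hc => h ((dvd_shift hρ).mp hc)
        rw [if_neg h, hsucc, if_neg hdvd, ih]
        simp


lemma slot_key {e ρ : ℕ} (hρ : ρ < e) (n : ℕ) :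
    ρ + (n + e - 1 - ρ) % e + slotM e n ρ * e = n + e - 1 := by
  unfold slotM
  have h := Nat.div_add_mod (n + e - 1 - ρ) e
  have h2 : ρ ≤ n + e - 1 := by omega
  have h3 : (n + e - 1 - ρ) / e * e = e * ((n + e - 1 - ρ) / e) := Nat.mul_comm _ _
  omega

lemma range_filter_lt (M t : ℕ) :
    (Multiset.range M).filter (fun i => i < t) = Multiset.range (min t M) := by
  have : (Finset.range M).filter (fun i => i < t) = Finset.range (min t M) := by
    ext j
    simp only [Finset.mem_filter, Finset.mem_range, lt_min_iff]
    omega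
  have h2 := congrArg Finset.val this
  simpa using h2

lemma range_filter_ge (M t : ℕ) :
    Multiset.card ((Multiset.range M).filter (fun i => t ≤ i)) = M - t := by
  have : (Finset.range M).filter (fun i => t ≤ i) = Finset.Ico t M := by
    ext j
    simp only [Finset.mem_filter, Finset.mem_range, Finset.mem_Ico]
    omega
  have h2 := congrArg Finset.card this
  have h3 : ((Finset.range M).filter (fun i => t ≤ i)).card = M - t := by
    simpa [Nat.card_Ico] using h2
  exact h3

/-- countP over a sum-of-range-map (for Finset.sum conversions) -/
lemma msum_range {β : Type*} [AddCommMonoid β] (m : ℕ) (F : ℕ → β) :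
    ((Multiset.range m).map F).sum = ∑ j ∈ Finset.range m, F j := rfl

lemma countP_bind {α β : Type*} (s : Multiset α) (f : α → Multiset β)
    (p : β → Prop) [DecidablePred p] :
    Multiset.countP p (s.bind f) = ((s.map fun a => Multiset.countP p (f a))).sum := by
  induction s using Multiset.induction with
  | empty => simp
  | cons a s ih => simp [Multiset.cons_bind, ih]

lemma countP_map' {α β : Type*} (s : Multiset α) (g : α → β)
    (p : β → Prop) [DecidablePred p] :
    Multiset.countP p (s.map g) = Multiset.countP (fun a => p (g a)) s := by
  induction s using Multiset.induction with
  | empty => simp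
  | cons a s ih => by_cases h : p (g a) <;> simp [h, ih]

lemma card_eq_sum_count {N : ℕ} {M : Multiset ℕ} (h : ∀ x ∈ M, x < N) :
    Multiset.card M = ∑ z ∈ Finset.range N, M.count z := by
  induction M using Multiset.induction with
  | empty => simp
  | cons a s ih =>
      have ha : a < N := h a (Multiset.mem_cons_self _ _)
      have hs : ∀ x ∈ s, x < N := fun x hx => h x (Multiset.mem_cons_of_mem hx)
      simp only [Multiset.card_cons, Multiset.count_cons]
      rw [Finset.sum_add_distrib, ← ih hs, Finset.sum_ite_eq' (Finset.range N) a (fun _ => 1),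
        if_pos (Finset.mem_range.mpr ha)]


def hiC (e : ℕ) (A : Multiset ℕ) (z : ℕ) : ℕ :=
  Multiset.countP (fun b => b % e = z % e ∧ z ≤ b) A

def loC (e : ℕ) (A : Multiset ℕ) (z : ℕ) : ℕ :=
  Multiset.countP (fun b => b % e = z % e ∧ b < z) A

lemma hi_add_lo (e : ℕ) (A : Multiset ℕ) (z : ℕ) :
    hiC e A z + loC e A z = Multiset.countP (fun b => b % e = z % e) A := by
  unfold hiC loC
  induction A using Multiset.induction with
  | empty => simp
  | cons a s ih =>
      simp only [Multiset.countP_cons]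
      by_cases h1 : a % e = z % e
      · by_cases h2 : z ≤ a
        · rw [if_pos ⟨h1, h2⟩, if_neg (by omega : ¬(a % e = z % e ∧ a < z)), if_pos h1]
          omega
        · rw [if_neg (by omega : ¬(a % e = z % e ∧ z ≤ a)),
            if_pos ⟨h1, by omega⟩, if_pos h1]
          omega
      · rw [if_neg (by tauto), if_neg (by tauto), if_neg h1]
        omega

lemma count_chain {e : ℕ} (he : 0 < e) (b z : ℕ) :
    Multiset.count z ((Multiset.range (b / e + 1)).map (fun j => b - j * e))
      = if b % e = z % e ∧ z ≤ b then 1 else 0 := by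
  rw [Multiset.count_map]
  by_cases h : b % e = z % e ∧ z ≤ b
  · rw [if_pos h]
    have hdvd : e ∣ b - z := (Nat.modEq_iff_dvd' h.2).mp (Nat.ModEq.symm h.1)
    obtain ⟨q, hq⟩ := hdvd
    have hqle : q ≤ b / e := by
      refine Nat.le_div_iff_mul_le he |>.mpr ?_
      have : q * e = e * q := Nat.mul_comm _ _
      omega
    have hfil : (Finset.range (b / e + 1)).filter (fun a => z = b - a * e) = {q} := by
      ext j
      simp only [Finset.mem_filter, Finset.mem_range, Finset.mem_singleton]
      constructor
      · rintro ⟨hj, hz⟩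
        have hje : j * e ≤ b := by
          have := (Nat.le_div_iff_mul_le he).mp (by omega : j ≤ b / e)
          exact this
        have hmul : j * e = e * q := by omega
        have : e * j = e * q := by rw [← hmul, Nat.mul_comm]
        exact Nat.eq_of_mul_eq_mul_left he this
      · intro hjq
        have hqe : q * e = e * q := Nat.mul_comm _ _
        subst hjq
        exact ⟨by omega, by omega⟩
    have : Multiset.filter (fun a => z = b - a * e) (Multiset.range (b / e + 1))
        = ((Finset.range (b / e + 1)).filter (fun a => z = b - a * e)).val := rfl
    rw [this, hfil]
    rfl
  · rw [if_neg h]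
    have : Multiset.filter (fun a => z = b - a * e) (Multiset.range (b / e + 1)) = 0 := by
      rw [Multiset.filter_eq_nil]
      intro j hj
      rw [Multiset.mem_range] at hj
      intro hz
      have hje : j * e ≤ b := by
        have := (Nat.le_div_iff_mul_le he).mp (by omega : j ≤ b / e)
        exact this
      have hzb : z ≤ b := by omega
      have hbz : b = z + j * e := by omega
      have : b % e = z % e := by rw [hbz, Nat.add_mul_mod_self_right]
      exact h ⟨this, hzb⟩
    rw [this]
    rfl

lemma count_eExt {e : ℕ} (he : 0 < e) (A : Multiset ℕ) (z : ℕ) :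
    (eExt e A).count z = hiC e A z := by
  unfold eExt hiC
  induction A using Multiset.induction with
  | empty => simp
  | cons a s ih =>
      rw [Multiset.cons_bind, Multiset.count_add, ih, Multiset.countP_cons, count_chain he]
      by_cases h : a % e = z % e ∧ z ≤ a <;> simp [h] <;> omega

lemma mem_eExt_lt {e : ℕ} {A : Multiset ℕ} {N : ℕ} (hA : ∀ b ∈ A, b < N) :
    ∀ x ∈ eExt e A, x < N := by
  intro x hx
  rw [eExt, Multiset.mem_bind] at hx
  obtain ⟨b, hb, hx⟩ := hx
  rw [Multiset.mem_map] at hx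
  obtain ⟨j, _, rfl⟩ := hx
  exact lt_of_le_of_lt (Nat.sub_le _ _) (hA b hb)

lemma card_filter_eExt {e : ℕ} (he : 0 < e) {A : Multiset ℕ} {N : ℕ}
    (hA : ∀ b ∈ A, b < N) (p : ℕ → Prop) [DecidablePred p] :
    Multiset.card ((eExt e A).filter p)
      = ∑ z ∈ Finset.range N, if p z then hiC e A z else 0 := by
  have hE : ∀ x ∈ (eExt e A).filter p, x < N := fun x hx =>
    mem_eExt_lt hA x (Multiset.mem_of_mem_filter hx)
  rw [card_eq_sum_count hE]
  refine Finset.sum_congr rfl fun z _ => ?_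
  rw [Multiset.count_filter]
  split
  · rw [count_eExt he]
  · rfl

lemma card_eExt {e : ℕ} (he : 0 < e) {A : Multiset ℕ} {N : ℕ}
    (hA : ∀ b ∈ A, b < N) :
    Multiset.card (eExt e A) = ∑ z ∈ Finset.range N, hiC e A z := by
  rw [card_eq_sum_count (mem_eExt_lt hA)]
  exact Finset.sum_congr rfl fun z _ => count_eExt he A z


lemma runnerCount_eq (e d : ℕ) (A : Multiset ℕ) :
    runnerCount e d A = Multiset.countP (fun b => b % e = d) A :=
  (Multiset.countP_eq_card_filter _ _).symm

lemma hiC_eq_sub (e : ℕ) (A : Multiset ℕ) (z : ℕ) :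
    hiC e A z = runnerCount e (z % e) A - loC e A z := by
  have := hi_add_lo e A z
  rw [runnerCount_eq]
  omega

lemma loC_le_runner (e : ℕ) (A : Multiset ℕ) (z : ℕ) :
    loC e A z ≤ runnerCount e (z % e) A := by
  have := hi_add_lo e A z
  rw [runnerCount_eq]
  omega

lemma nodup_le_range {A : Multiset ℕ} {n : ℕ} (hnd : A.Nodup) (hA : ∀ b ∈ A, b < n) :
    A ≤ Multiset.range n := by
  rw [Multiset.le_iff_subset hnd]
  intro x hx
  rw [Multiset.mem_range]
  exact hA x hx

lemma loC_le_div {e : ℕ} (he : 0 < e) {A : Multiset ℕ} (hnd : A.Nodup) (z : ℕ) :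
    loC e A z ≤ z / e := by
  have h1 : A.filter (fun b => b % e = z % e ∧ b < z) ≤
      (Multiset.range z).filter (fun x => x % e = z % e) := by
    rw [Multiset.le_iff_subset (Multiset.Nodup.filter _ hnd)]
    intro x hx
    rw [Multiset.mem_filter] at hx ⊢
    exact ⟨Multiset.mem_range.mpr hx.2.2, hx.2.1⟩
  have h2 := Multiset.card_le_card h1
  rw [slot_eq he (Nat.mod_lt _ he) z, Multiset.card_map, Multiset.card_range,
    slotM_self he] at h2
  unfold loC
  rw [Multiset.countP_eq_card_filter]
  exact h2

lemma runnerCount_le_slotM {e : ℕ} (he : 0 < e) {A : Multiset ℕ} {n ρ : ℕ}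
    (hnd : A.Nodup) (hA : ∀ b ∈ A, b < n) (hρ : ρ < e) :
    runnerCount e ρ A ≤ slotM e n ρ := by
  have h1 := Multiset.card_le_card
    (Multiset.filter_le_filter (fun b => b % e = ρ) (nodup_le_range hnd hA))
  rw [slot_eq he hρ n, Multiset.card_map, Multiset.card_range] at h1
  exact h1

lemma sum_runnerCount {e : ℕ} (he : 0 < e) (A : Multiset ℕ) :
    ∑ j ∈ Finset.range e, runnerCount e j A = Multiset.card A := by
  induction A using Multiset.induction with
  | empty => simp [runnerCount]
  | cons a s ih =>
      have : ∀ j, runnerCount e j (a ::ₘ s) = runnerCount e j s + if a % e = j then 1 else 0 := by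
        intro j
        rw [runnerCount_eq, runnerCount_eq, Multiset.countP_cons]
      simp only [this, Multiset.card_cons]
      rw [Finset.sum_add_distrib, ih,
        Finset.sum_ite_eq (Finset.range e) (a % e) (fun _ => 1),
        if_pos (Finset.mem_range.mpr (Nat.mod_lt _ he))]

lemma coreBeta_card {e : ℕ} (he : 0 < e) (A : Multiset ℕ) :
    Multiset.card (coreBeta e A) = Multiset.card A := by
  rw [coreBeta, Multiset.card_bind, msum_range, ← sum_runnerCount he A]
  exact Finset.sum_congr rfl fun j _ => by simp

lemma coreBeta_nodup {e : ℕ} (he : 0 < e) (A : Multiset ℕ) : (coreBeta e A).Nodup := by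
  rw [coreBeta, Multiset.nodup_bind]
  constructor
  · intro j _
    refine Multiset.Nodup.map ?_ (Multiset.nodup_range _)
    intro x y hxy
    simp only at hxy
    exact Nat.eq_of_mul_eq_mul_right he (by omega)
  · refine ⟨List.range e, rfl, ?_⟩
    rw [List.pairwise_iff_getElem]
    intro i j hi hj hij
    simp only [List.getElem_range]
    have hi' : i < e := by simpa using hi
    have hj' : j < e := by simpa using hj
    rw [Function.onFun, Multiset.disjoint_left]
    intro a ha hb
    rw [Multiset.mem_map] at ha hb
    obtain ⟨x, _, rfl⟩ := ha
    obtain ⟨y, _, hy⟩ := hb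
    have h1 : (i + x * e) % e = i := by
      rw [Nat.add_mul_mod_self_right, Nat.mod_eq_of_lt hi']
    have h2 : (j + y * e) % e = j := by
      rw [Nat.add_mul_mod_self_right, Nat.mod_eq_of_lt hj']
    rw [hy] at h2
    omega


lemma mem_coreBeta_lt {e : ℕ} (he : 0 < e) {A : Multiset ℕ} {n : ℕ}
    (hnd : A.Nodup) (hA : ∀ b ∈ A, b < n) :
    ∀ x ∈ coreBeta e A, x < n := by
  intro x hx
  rw [coreBeta, Multiset.mem_bind] at hx
  obtain ⟨j, hj, hx⟩ := hx
  rw [Multiset.mem_range] at hj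
  rw [Multiset.mem_map] at hx
  obtain ⟨i, hi, rfl⟩ := hx
  rw [Multiset.mem_range] at hi
  have hc : runnerCount e j A ≤ slotM e n j := runnerCount_le_slotM he hnd hA hj
  have hkey := slot_key hj n
  have : i + 1 ≤ slotM e n j := by omega
  have h1 : (i + 1) * e ≤ slotM e n j * e := Nat.mul_le_mul_right e this
  have h2 : (i + 1) * e = i * e + e := by ring
  omega

lemma runnerCount_coreBeta {e : ℕ} (he : 0 < e) (A : Multiset ℕ) {d : ℕ} (hd : d < e) :
    runnerCount e d (coreBeta e A) = runnerCount e d A := by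
  rw [runnerCount_eq, coreBeta, countP_bind, msum_range]
  have hval : ∀ j ∈ Finset.range e,
      Multiset.countP (fun b => b % e = d)
        ((Multiset.range (runnerCount e j A)).map (fun i => j + i * e))
      = if j = d then runnerCount e j A else 0 := by
    intro j hj
    rw [Finset.mem_range] at hj
    rw [countP_map']
    by_cases h : j = d
    · subst h
      rw [if_pos rfl]
      have : ∀ i, (j + i * e) % e = j := fun i => by
        rw [Nat.add_mul_mod_self_right, Nat.mod_eq_of_lt hj]
      calc Multiset.countP (fun i => (j + i * e) % e = j) (Multiset.range (runnerCount e j A))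
          = Multiset.countP (fun _ => True) (Multiset.range (runnerCount e j A)) := by
            rw [Multiset.countP_eq_card_filter, Multiset.countP_eq_card_filter]
            congr 1
            exact Multiset.filter_congr (fun i _ => by simp [this i])
        _ = runnerCount e j A := by simp
    · rw [if_neg h]
      rw [Multiset.countP_eq_card_filter]
      rw [Multiset.filter_eq_nil.mpr, Multiset.card_zero]
      intro i _
      rw [Nat.add_mul_mod_self_right, Nat.mod_eq_of_lt hj]
      exact h
  rw [Finset.sum_congr rfl hval, Finset.sum_ite_eq' (Finset.range e) d
    (fun j => runnerCount e j A), if_pos (Finset.mem_range.mpr hd)]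

lemma hiC_coreBeta {e : ℕ} (he : 0 < e) (A : Multiset ℕ) (z : ℕ) :
    hiC e (coreBeta e A) z = runnerCount e (z % e) A - z / e := by
  rw [hiC, coreBeta, countP_bind, msum_range]
  have hval : ∀ j ∈ Finset.range e,
      Multiset.countP (fun b => b % e = z % e ∧ z ≤ b)
        ((Multiset.range (runnerCount e j A)).map (fun i => j + i * e))
      = if j = z % e then runnerCount e j A - z / e else 0 := by
    intro j hj
    rw [Finset.mem_range] at hj
    rw [countP_map']
    have hmod : ∀ i, (j + i * e) % e = j := fun i => by
      rw [Nat.add_mul_mod_self_right, Nat.mod_eq_of_lt hj]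
    by_cases h : j = z % e
    · rw [if_pos h]
      have hdm : e * (z / e) + z % e = z := Nat.div_add_mod z e
      have hiff : ∀ i, ((j + i * e) % e = z % e ∧ z ≤ j + i * e) ↔ z / e ≤ i := by
        intro i
        rw [hmod i]
        constructor
        · rintro ⟨_, hle⟩
          by_contra hlt
          push_neg at hlt
          have : i + 1 ≤ z / e := hlt
          have h1 : (i + 1) * e ≤ z / e * e := Nat.mul_le_mul_right e this
          have h2 : (i + 1) * e = i * e + e := by ring
          have h3 : z / e * e = e * (z / e) := Nat.mul_comm _ _
          omega
        · intro hle
          refine ⟨h, ?_⟩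
          have h1 : z / e * e ≤ i * e := Nat.mul_le_mul_right e hle
          have h3 : z / e * e = e * (z / e) := Nat.mul_comm _ _
          omega
      rw [Multiset.countP_eq_card_filter, Multiset.filter_congr (fun i _ => hiff i),
        range_filter_ge]
    · rw [if_neg h, Multiset.countP_eq_card_filter, Multiset.filter_eq_nil.mpr,
        Multiset.card_zero]
      intro i _ hc
      exact h (by rw [← hmod i]; exact hc.1)
  rw [Finset.sum_congr rfl hval, Finset.sum_ite_eq' (Finset.range e) (z % e)
    (fun j => runnerCount e j A - z / e), if_pos (Finset.mem_range.mpr (Nat.mod_lt _ he))]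

lemma conj_spec {f : ℕ → ℕ} (hf : IsPartition f) (j : ℕ) :
    ∀ l, l < conj f j ↔ j + 1 ≤ f l := by
  obtain ⟨mono, N, hN⟩ := hf
  have hex : ∃ l, f l ≤ j := ⟨N, by rw [hN N le_rfl]; omega⟩
  set M := Nat.find hex with hM
  have key : ∀ l, l < M ↔ j + 1 ≤ f l := by
    intro l
    constructor
    · intro h
      have := Nat.find_min hex h
      omega
    · intro h
      by_contra hl
      push_neg at hl
      have h2 : f l ≤ f M := mono hl
      have h3 : f M ≤ j := Nat.find_spec hex
      omega
  have hconj : conj f j = M := by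
    unfold conj
    have hset : {l : ℕ | j + 1 ≤ f l} = Set.Iio M := by
      ext l
      rw [Set.mem_setOf_eq, Set.mem_Iio]
      exact (key l).symm
    calc Nat.card {l : ℕ // j + 1 ≤ f l} = Nat.card {l : ℕ | j + 1 ≤ f l} := rfl
      _ = Nat.card (Set.Iio M) := by rw [hset]
      _ = M := by rw [Nat.card_eq_card_toFinset]; simp
  rw [hconj]
  exact key

lemma conj_le_iff {f : ℕ → ℕ} (hf : IsPartition f) (i j : ℕ) :
    i + 1 ≤ conj f j ↔ j + 1 ≤ f i := conj_spec hf j i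

lemma conj_isPartition {f : ℕ → ℕ} (hf : IsPartition f) : IsPartition (conj f) := by
  constructor
  · intro j j' hjj'
    by_contra h
    push_neg at h
    have h2 : conj f j < conj f j' := h
    have h3 := (conj_spec hf j' (conj f j)).mp h2
    have h4 := (conj_spec hf j (conj f j)).mpr (by omega)
    omega
  · refine ⟨f 0, fun j hj => ?_⟩
    by_contra h
    have h2 := (conj_spec hf j 0).mp (by omega)
    have h3 := hf.1 (Nat.zero_le 0)
    omega

lemma conj_zero_le {f : ℕ → ℕ} (hf : IsPartition f) {r : ℕ}
    (h : ∀ i, r ≤ i → f i = 0) : conj f 0 ≤ r := by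
  by_contra hc
  push_neg at hc
  have := (conj_spec hf 0 r).mp hc
  rw [h r le_rfl] at this
  omega

lemma mem_betaSet {f : ℕ → ℕ} {r b : ℕ} :
    b ∈ betaSet f r ↔ ∃ i, i < r ∧ f i + (r - 1 - i) = b := by
  rw [betaSet, Multiset.mem_map]
  constructor
  · rintro ⟨i, hi, rfl⟩
    exact ⟨i, Multiset.mem_range.mp hi, rfl⟩
  · rintro ⟨i, hi, rfl⟩
    exact ⟨i, Multiset.mem_range.mpr hi, rfl⟩

lemma betaSet_nodup {f : ℕ → ℕ} (hf : IsPartition f) (r : ℕ) : (betaSet f r).Nodup := by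
  rw [betaSet]
  refine Multiset.Nodup.map_on ?_ (Multiset.nodup_range _)
  intro x hx y hy hxy
  rw [Multiset.mem_range] at hx hy
  by_contra hne
  rcases Nat.lt_or_ge x y with h | h
  · have := hf.1 (le_of_lt h)
    omega
  · have hyx : y < x := by omega
    have := hf.1 (le_of_lt hyx)
    omega

lemma betaSet_lt {f : ℕ → ℕ} (hf : IsPartition f) {r s : ℕ} (hs : f 0 ≤ s) :
    ∀ b ∈ betaSet f r, b < r + s := by
  intro b hb
  obtain ⟨i, hi, rfl⟩ := mem_betaSet.mp hb
  have h1 : f i ≤ f 0 := hf.1 (Nat.zero_le i)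
  omega

lemma betaSet_card (f : ℕ → ℕ) (r : ℕ) : Multiset.card (betaSet f r) = r := by
  rw [betaSet, Multiset.card_map, Multiset.card_range]

/-- the fundamental complement property of the beta set of the conjugate -/
lemma comp_betaSet {f : ℕ → ℕ} (hf : IsPartition f) {r s : ℕ}
    (hr : conj f 0 ≤ r) (hs : f 0 ≤ s) :
    betaSet f r + (betaSet (conj f) s).map (fun b => r + s - 1 - b)
      = Multiset.range (r + s) := by
  have hconj := conj_isPartition hf
  have hcle : ∀ j, conj f j ≤ r := fun j => le_trans (hconj.1 (Nat.zero_le j)) hr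
  have hD : (betaSet (conj f) s).map (fun b => r + s - 1 - b)
      = (Multiset.range s).map (fun j => r + j - conj f j) := by
    rw [betaSet, Multiset.map_map]
    refine Multiset.map_congr rfl ?_
    intro j hj
    rw [Multiset.mem_range] at hj
    have := hcle j
    simp only [Function.comp_apply]
    omega
  rw [hD]
  have hndB := betaSet_nodup hf r
  have hndD : ((Multiset.range s).map (fun j => r + j - conj f j)).Nodup := by
    refine Multiset.Nodup.map_on ?_ (Multiset.nodup_range _)
    intro x hx y hy hxy
    rw [Multiset.mem_range] at hx hy
    by_contra hne
    rcases Nat.lt_or_ge x y with h | h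
    · have h1 := hconj.1 (le_of_lt h)
      have h2 := hcle x
      omega
    · have hyx : y < x := by omega
      have h1 := hconj.1 (le_of_lt hyx)
      have h2 := hcle y
      omega
  have hdisj : Disjoint (betaSet f r)
      ((Multiset.range s).map (fun j => r + j - conj f j)) := by
    rw [Multiset.disjoint_left]
    intro b hbB hbD
    obtain ⟨i, hi, rfl⟩ := mem_betaSet.mp hbB
    rw [Multiset.mem_map] at hbD
    obtain ⟨j, hj, hjeq⟩ := hbD
    rw [Multiset.mem_range] at hj
    have h1 := hcle j
    have hiff : i + 1 ≤ conj f j ↔ j + 1 ≤ f i := conj_le_iff hf i j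
    omega
  have hnd : (betaSet f r + (Multiset.range s).map (fun j => r + j - conj f j)).Nodup :=
    Multiset.Nodup.add_iff hndB hndD |>.mpr hdisj
  have hsub : ∀ x ∈ betaSet f r + (Multiset.range s).map (fun j => r + j - conj f j),
      x < r + s := by
    intro x hx
    rw [Multiset.mem_add] at hx
    rcases hx with hx | hx
    · exact betaSet_lt hf hs x hx
    · rw [Multiset.mem_map] at hx
      obtain ⟨j, hj, rfl⟩ := hx
      rw [Multiset.mem_range] at hj
      omega
  refine Multiset.eq_of_le_of_card_le (nodup_le_range hnd hsub) ?_
  rw [Multiset.card_range, Multiset.card_add, betaSet_card, Multiset.card_map,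
    Multiset.card_range]

lemma conj_betaSet_eq {f : ℕ → ℕ} (hf : IsPartition f) {r s : ℕ}
    (hr : conj f 0 ≤ r) (hs : f 0 ≤ s) :
    betaSet (conj f) s
      = (Multiset.range (r + s) - betaSet f r).map (fun x => r + s - 1 - x) := by
  have hcomp := comp_betaSet hf hr hs
  have hsub : Multiset.range (r + s) - betaSet f r
      = (betaSet (conj f) s).map (fun b => r + s - 1 - b) := by
    rw [← hcomp, add_tsub_cancel_left]
  rw [hsub, Multiset.map_map]
  have hconj := conj_isPartition hf
  have hcle : ∀ j, conj f j ≤ r := fun j => le_trans (hconj.1 (Nat.zero_le j)) hr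
  conv_lhs => rw [show betaSet (conj f) s = (betaSet (conj f) s).map id from
    (Multiset.map_id _).symm]
  refine (Multiset.map_congr rfl ?_).symm
  intro b hb
  obtain ⟨j, hj, rfl⟩ := mem_betaSet.mp hb
  have := hcle j
  simp only [Function.comp_apply, id_eq]
  omega

section PartOfBeta

lemma sortRev_desc {C : Multiset ℕ} (hnd : C.Nodup) :
    ∀ i j, i < j → j < Multiset.card C →
      ((C.sort (· ≤ ·)).reverse.getD j 0) < ((C.sort (· ≤ ·)).reverse.getD i 0) := by
  intro i j hij hj
  set l := C.sort (· ≤ ·) with hl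
  have hlen : l.length = Multiset.card C := Multiset.length_sort _
  have hsorted : l.Pairwise (· ≤ ·) := Multiset.pairwise_sort _ _
  have hlnd : l.Nodup := by
    have h : (↑l : Multiset ℕ).Nodup := by rw [hl, Multiset.sort_eq]; exact hnd
    exact h
  have hslt : l.Pairwise (· < ·) := by
    have hp := List.Pairwise.and hsorted hlnd
    exact hp.imp (fun h => lt_of_le_of_ne h.1 h.2)
  have hget := List.pairwise_iff_getElem.mp hslt
  have hjl : j < l.reverse.length := by rw [List.length_reverse, hlen]; omega
  have hil : i < l.reverse.length := by rw [List.length_reverse, hlen]; omega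
  rw [List.getD_eq_getElem _ _ hjl, List.getD_eq_getElem _ _ hil,
    List.getElem_reverse, List.getElem_reverse]
  refine hget _ _ ?_ ?_ ?_ <;> omega

lemma sortRev_chain {C : Multiset ℕ} (hnd : C.Nodup) :
    ∀ i m, i + m < Multiset.card C →
      ((C.sort (· ≤ ·)).reverse.getD (i + m) 0) + m
        ≤ ((C.sort (· ≤ ·)).reverse.getD i 0) := by
  intro i m
  induction m with
  | zero => intro _; simp
  | succ m ih =>
      intro h
      have h1 := ih (by omega)
      have h2 := sortRev_desc hnd (i + m) (i + m + 1) (by omega) (by omega)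
      have : i + (m + 1) = i + m + 1 := by omega
      rw [this]
      omega

lemma sortRev_ge {C : Multiset ℕ} (hnd : C.Nodup) :
    ∀ i, i < Multiset.card C →
      Multiset.card C - 1 - i ≤ ((C.sort (· ≤ ·)).reverse.getD i 0) := by
  intro i hi
  have h := sortRev_chain hnd i (Multiset.card C - 1 - i) (by omega)
  omega

lemma partOfBeta_zero {C : Multiset ℕ} {i : ℕ} (h : Multiset.card C ≤ i) :
    partOfBeta C i = 0 := by
  unfold partOfBeta
  rw [List.getD_eq_default]
  · omega
  · rw [List.length_reverse, Multiset.length_sort]; omega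

lemma partOfBeta_isPartition {C : Multiset ℕ} (hnd : C.Nodup) :
    IsPartition (partOfBeta C) := by
  constructor
  · intro i j hij
    by_cases hj : j < Multiset.card C
    · rcases Nat.eq_or_lt_of_le hij with rfl | hlt
      · exact le_rfl
      · have h1 := sortRev_chain hnd i (j - i) (by omega)
        have h2 := sortRev_ge hnd i (by omega)
        have h3 : i + (j - i) = j := by omega
        rw [h3] at h1
        unfold partOfBeta
        omega
    · rw [partOfBeta_zero (by omega)]
      omega
  · exact ⟨Multiset.card C, fun i hi => partOfBeta_zero hi⟩

lemma betaSet_partOfBeta {C : Multiset ℕ} (hnd : C.Nodup) :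
    betaSet (partOfBeta C) (Multiset.card C) = C := by
  set r := Multiset.card C with hr
  set l := (C.sort (· ≤ ·)).reverse with hl
  have hlen : l.length = r := by rw [hl, List.length_reverse, Multiset.length_sort]
  have h1 : betaSet (partOfBeta C) r = (Multiset.range r).map (fun i => l.getD i 0) := by
    rw [betaSet]
    refine Multiset.map_congr rfl ?_
    intro i hi
    rw [Multiset.mem_range] at hi
    have hge := sortRev_ge hnd i hi
    rw [← hl, ← hr] at hge
    simp only [partOfBeta, ← hl, ← hr]
    omega
  rw [h1]
  have h2 : List.map (fun i => l.getD i 0) (List.range r) = l := by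
    apply List.ext_getElem
    · rw [List.length_map, List.length_range, hlen]
    · intro i hi1 hi2
      simp only [List.getElem_map, List.getElem_range]
      rw [List.getD_eq_getElem]
  have h3 : (Multiset.range r).map (fun i => l.getD i 0)
      = ((List.range r).map (fun i => l.getD i 0) : List ℕ) := rfl
  rw [h3, h2, hl]
  rw [Multiset.coe_reverse, Multiset.sort_eq]

lemma partOfBeta_head_bound {C : Multiset ℕ} (hnd : C.Nodup) {n : ℕ}
    (hC : ∀ b ∈ C, b < n) (hn : Multiset.card C ≤ n) :
    partOfBeta C 0 + Multiset.card C ≤ n := by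
  rcases Nat.eq_zero_or_pos (Multiset.card C) with h0 | hpos
  · rw [partOfBeta_zero (by omega)]
    omega
  · set l := (C.sort (· ≤ ·)).reverse with hl
    have hlen : l.length = Multiset.card C := by
      rw [hl, List.length_reverse, Multiset.length_sort]
    obtain ⟨a, l', hal⟩ : ∃ a l', l = a :: l' := by
      cases hll : l with
      | nil => rw [hll] at hlen; simp at hlen; omega
      | cons a l' => exact ⟨a, l', rfl⟩
    have h3 : (↑l : Multiset ℕ) = C := by rw [hl, Multiset.coe_reverse, Multiset.sort_eq]
    have hmem : l.getD 0 0 ∈ C := by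
      rw [← h3, hal]
      simp
    have hlt : l.getD 0 0 < n := hC _ hmem
    have hge := sortRev_ge hnd 0 (by omega)
    rw [← hl] at hge
    simp only [partOfBeta, ← hl]
    omega

end PartOfBeta

lemma mul_le_mul_right_iff' {e i j : ℕ} (he : 0 < e) : i * e ≤ j * e ↔ i ≤ j :=
  ⟨fun h => Nat.le_of_mul_le_mul_right h he, fun h => Nat.mul_le_mul_right e h⟩

lemma countP_compl {n : ℕ} {A : Multiset ℕ} (hnd : A.Nodup) (hA : ∀ a ∈ A, a < n)
    (p : ℕ → Prop) [DecidablePred p] :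
    Multiset.countP p (Multiset.range n - A)
      = Multiset.countP p (Multiset.range n) - Multiset.countP p A := by
  have hle : A ≤ Multiset.range n := nodup_le_range hnd hA
  have hsum : (Multiset.range n - A) + A = Multiset.range n := tsub_add_cancel_of_le hle
  have h := congrArg (Multiset.countP p) hsum
  rw [Multiset.countP_add] at h
  omega

lemma countP_runner_range {e : ℕ} (he : 0 < e) {ρ : ℕ} (hρ : ρ < e) (n : ℕ) :
    Multiset.countP (fun x => x % e = ρ) (Multiset.range n) = slotM e n ρ := by
  rw [Multiset.countP_eq_card_filter, slot_eq he hρ n, Multiset.card_map,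
    Multiset.card_range]

lemma countP_runner_below {e : ℕ} (he : 0 < e) (n z : ℕ) :
    Multiset.countP (fun x => x % e = z % e ∧ x + e ≤ z) (Multiset.range n)
      = min (z / e) (slotM e n (z % e)) := by
  have h1 : Multiset.countP (fun x => x % e = z % e ∧ x + e ≤ z) (Multiset.range n)
      = Multiset.countP (fun x => x + e ≤ z)
          ((Multiset.range n).filter (fun x => x % e = z % e)) := by
    rw [Multiset.countP_filter]
    refine Multiset.countP_congr rfl ?_
    intro x _
    simp only [eq_iff_iff]
    tauto
  rw [h1, slot_eq he (Nat.mod_lt _ he) n, countP_map']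
  have hdm : e * (z / e) + z % e = z := Nat.div_add_mod z e
  have h2 : ∀ i, ((z % e + i * e) + e ≤ z) ↔ i < z / e := by
    intro i
    constructor
    · intro h
      by_contra hc
      push_neg at hc
      have := (mul_le_mul_right_iff' he).mpr hc
      have h3 : z / e * e = e * (z / e) := Nat.mul_comm _ _
      omega
    · intro h
      have h4 : i + 1 ≤ z / e := h
      have := (mul_le_mul_right_iff' he).mpr h4
      have h5 : (i + 1) * e = i * e + e := by ring
      have h3 : z / e * e = e * (z / e) := Nat.mul_comm _ _
      omega
  rw [Multiset.countP_congr rfl (fun i _ => by simp only [eq_iff_iff]; exact h2 i),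
    Multiset.countP_eq_card_filter, range_filter_lt, Multiset.card_range]

lemma countP_below_eq_loC {e : ℕ} (he : 0 < e) (A : Multiset ℕ) (z : ℕ) :
    Multiset.countP (fun x => x % e = z % e ∧ x + e ≤ z) A = loC e A z := by
  rw [loC]
  refine Multiset.countP_congr rfl ?_
  intro x _
  simp only [eq_iff_iff]
  constructor
  · rintro ⟨hm, hle⟩
    exact ⟨hm, by omega⟩
  · rintro ⟨hm, hlt⟩
    refine ⟨hm, ?_⟩
    have hdvd : e ∣ z - x := (Nat.modEq_iff_dvd' (by omega)).mp hm
    have := Nat.le_of_dvd (by omega) hdvd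
    omega

lemma hiC_compl {e : ℕ} (he : 0 < e) {A : Multiset ℕ} {n : ℕ}
    (hnd : A.Nodup) (hA : ∀ a ∈ A, a < n) {z : ℕ} (hz : z ≤ n + e - 1) :
    hiC e ((Multiset.range n - A).map (fun x => n - 1 - x)) (n + e - 1 - z)
      = min (z / e) (slotM e n (z % e)) - loC e A z := by
  rw [hiC, countP_map']
  have hiff : ∀ x ∈ Multiset.range n - A,
      ((n - 1 - x) % e = (n + e - 1 - z) % e ∧ n + e - 1 - z ≤ n - 1 - x)
        = (x % e = z % e ∧ x + e ≤ z) := by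
    intro x hx
    have hxn : x < n := Multiset.mem_range.mp
      (Multiset.mem_of_le (Multiset.sub_le_self _ _) hx)
    have h1 : n - 1 - x = (n + e - 1) - (x + e) := by omega
    simp only [eq_iff_iff]
    constructor
    · rintro ⟨hm, hle⟩
      have hxe : x + e ≤ z := by omega
      refine ⟨?_, hxe⟩
      rw [h1] at hm
      have h2 := (refl_mod (e := e) (K := n + e - 1) (x := x + e) (z := z)
        (by omega) (by omega)).mp hm
      rw [Nat.add_mod_right] at h2
      exact h2
    · rintro ⟨hm, hle⟩
      refine ⟨?_, by omega⟩
      rw [h1]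
      refine (refl_mod (by omega) (by omega)).mpr ?_
      rw [Nat.add_mod_right]
      exact hm
  rw [Multiset.countP_congr rfl hiff, countP_compl hnd hA, countP_runner_below he,
    countP_below_eq_loC he]

lemma runnerCount_compl {e : ℕ} (he : 0 < e) {A : Multiset ℕ} {n : ℕ}
    (hnd : A.Nodup) (hA : ∀ a ∈ A, a < n) {d : ℕ} (hd : d < e) :
    runnerCount e ((n + e - 1 - d) % e) ((Multiset.range n - A).map (fun x => n - 1 - x))
      = slotM e n d - runnerCount e d A := by
  rw [runnerCount_eq, countP_map']
  have hiff : ∀ x ∈ Multiset.range n - A,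
      ((n - 1 - x) % e = (n + e - 1 - d) % e) = (x % e = d) := by
    intro x hx
    have hxn : x < n := Multiset.mem_range.mp
      (Multiset.mem_of_le (Multiset.sub_le_self _ _) hx)
    have h1 : n - 1 - x = (n + e - 1) - (x + e) := by omega
    simp only [eq_iff_iff]
    rw [h1, refl_mod (e := e) (K := n + e - 1) (x := x + e) (z := d)
      (by omega) (by omega), Nat.add_mod_right, Nat.mod_eq_of_lt hd]
  rw [Multiset.countP_congr rfl hiff, countP_compl hnd hA, countP_runner_range he hd,
    runnerCount_eq]

lemma lk_eq {e : ℕ} (he : 0 < e) (k r : ℕ) (f : ℕ → ℕ) {N : ℕ}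
    (hN : ∀ b ∈ betaSet f r, b < N) :
    Lk e k r f = ∑ z ∈ Finset.range N,
      if (r + k) % e + runnerCount e ((r + k) % e) (betaSet f r) * e < z
      then hiC e (betaSet f r) z else 0 := by
  rw [Lk]
  exact card_filter_eExt he hN _

lemma kEmpty_iff_hiC {e : ℕ} (he : 0 < e) (k r : ℕ) (f : ℕ → ℕ) :
    KEmpty e k r f ↔
      hiC e (betaSet f r)
        ((r + k) % e + runnerCount e ((r + k) % e) (betaSet f r) * e) = 0 := by
  have hdlt : (r + k) % e < e := Nat.mod_lt _ he
  have hmod : ((r + k) % e + runnerCount e ((r + k) % e) (betaSet f r) * e) % e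
      = (r + k) % e := by
    rw [Nat.add_mul_mod_self_right, Nat.mod_eq_of_lt hdlt]
  rw [KEmpty, hiC, Multiset.countP_eq_zero]
  constructor
  · intro h b hb hcond
    obtain ⟨hm, hle⟩ := hcond
    rw [hmod] at hm
    exact absurd (h b hb hm) (by omega)
  · intro h b hb hm
    by_contra hcon
    push_neg at hcon
    exact h b hb ⟨by rw [hmod]; exact hm, hcon⟩

lemma compl_lt {n : ℕ} (A : Multiset ℕ) :
    ∀ b ∈ (Multiset.range n - A).map (fun x => n - 1 - x), b < n := by
  intro b hb
  rw [Multiset.mem_map] at hb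
  obtain ⟨x, hx, rfl⟩ := hb
  have hxn : x < n := Multiset.mem_range.mp
    (Multiset.mem_of_le (Multiset.sub_le_self _ _) hx)
  omega

lemma pointwise_v1 {e : ℕ} (he : 0 < e) {B : Multiset ℕ} (hndB : B.Nodup) (z : ℕ) :
    hiC e B z = hiC e (coreBeta e B) z
      + (min (z / e) (runnerCount e (z % e) B) - loC e B z) := by
  have h1 := hiC_eq_sub e B z
  have h2 := hiC_coreBeta he B z
  have h3 := loC_le_div he hndB z
  have h4 := loC_le_runner e B z
  omega

lemma pointwise_v2 {e n : ℕ} (he : 0 < e) {B : Multiset ℕ} (hndB : B.Nodup)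
    (hfB : ∀ b ∈ B, b < n) {z : ℕ} (hz : z ≤ n + e - 1) :
    hiC e ((Multiset.range n - B).map (fun x => n - 1 - x)) (n + e - 1 - z)
      = hiC e ((Multiset.range n - coreBeta e B).map (fun x => n - 1 - x)) (n + e - 1 - z)
        + (min (z / e) (runnerCount e (z % e) B) - loC e B z) := by
  have hρ : z % e < e := Nat.mod_lt _ he
  have h3 := loC_le_div he hndB z
  have h4 := loC_le_runner e B z
  have h5 := hiC_compl he hndB hfB hz
  have h6 := hiC_compl he (coreBeta_nodup he B) (mem_coreBeta_lt he hndB hfB) hz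
  have h2 := hiC_coreBeta he B z
  have h7 : hiC e (coreBeta e B) z + loC e (coreBeta e B) z
      = runnerCount e (z % e) B := by
    have h := hi_add_lo e (coreBeta e B) z
    rw [← runnerCount_eq, runnerCount_coreBeta he B hρ] at h
    exact h
  have h8 : runnerCount e (z % e) B ≤ slotM e n (z % e) :=
    runnerCount_le_slotM he hndB hfB hρ
  omega

lemma hiC_compl_at_threshold {e n : ℕ} (he : 0 < e) {B : Multiset ℕ}
    (hndB : B.Nodup) (hfB : ∀ b ∈ B, b < n) {d : ℕ} (hd : d < e) :
    hiC e ((Multiset.range n - B).map (fun x => n - 1 - x))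
        (n + e - 1 - (d + runnerCount e d B * e))
      = hiC e B (d + runnerCount e d B * e) := by
  have hc : runnerCount e d B ≤ slotM e n d := runnerCount_le_slotM he hndB hfB hd
  have hmod : (d + runnerCount e d B * e) % e = d := by
    rw [Nat.add_mul_mod_self_right, Nat.mod_eq_of_lt hd]
  have hdiv : (d + runnerCount e d B * e) / e = runnerCount e d B := by
    rw [Nat.add_mul_div_right _ _ he, Nat.div_eq_of_lt hd, Nat.zero_add]
  have hTle : d + runnerCount e d B * e ≤ n + e - 1 := by
    have hkey := slot_key hd n
    have hmm := (mul_le_mul_right_iff' (i := runnerCount e d B) (j := slotM e n d) he).mpr hc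
    omega
  rw [hiC_compl he hndB hfB hTle, hmod, hdiv, hiC_eq_sub, hmod, min_eq_left hc]

lemma eWeight_eq {e n : ℕ} (he : 0 < e) {B : Multiset ℕ} (hndB : B.Nodup)
    (hfB : ∀ b ∈ B, b < n) :
    eWeight e B = ∑ z ∈ Finset.range (n + e),
      (min (z / e) (runnerCount e (z % e) B) - loC e B z) := by
  have hfB' : ∀ b ∈ B, b < n + e := fun b hb => lt_of_lt_of_le (hfB b hb) (by omega)
  have hKlt : ∀ b ∈ coreBeta e B, b < n + e := fun b hb =>
    lt_of_lt_of_le (mem_coreBeta_lt he hndB hfB b hb) (by omega)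
  have hle : eExt e (coreBeta e B) ≤ eExt e B := by
    rw [Multiset.le_iff_count]
    intro z
    rw [count_eExt he, count_eExt he]
    have h := pointwise_v1 he hndB z
    omega
  rw [eWeight, weightMS, Multiset.card_sub hle, card_eExt he hfB', card_eExt he hKlt]
  have hsum : ∑ z ∈ Finset.range (n + e), hiC e B z
      = ∑ z ∈ Finset.range (n + e), hiC e (coreBeta e B) z
        + ∑ z ∈ Finset.range (n + e),
            (min (z / e) (runnerCount e (z % e) B) - loC e B z) := by
    rw [← Finset.sum_add_distrib]
    exact Finset.sum_congr rfl fun z _ => pointwise_v1 he hndB z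
  omega

end Stmt11Aux

open Stmt11Aux

/-- λ is k-empty iff λ' is (e-1-k)-empty, and in that case
𝔏_k(λ) + 𝔏_{e-1-k}(λ') = 𝔏_k(κ) + 𝔏_{e-1-k}(κ') + w, where κ is the e-core and w
the e-weight of λ. -/
theorem stmt11 (e : ℕ) (he : 2 ≤ e) (k : ℕ) (hk : k < e) (f : ℕ → ℕ)
    (hf : IsPartition f) (r s : ℕ) (hr : conj f 0 ≤ r) (hs : f 0 ≤ s) :
    (KEmpty e k r f ↔ KEmpty e (e - 1 - k) s (conj f)) ∧
    (KEmpty e k r f →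
      Lk e k r f + Lk e (e - 1 - k) s (conj f)
        = Lk e k r (partOfBeta (coreBeta e (betaSet f r)))
          + Lk e (e - 1 - k) s (conj (partOfBeta (coreBeta e (betaSet f r))))
          + eWeight e (betaSet f r)) := by
  have he0 : 0 < e := by omega
  have hndB : (betaSet f r).Nodup := betaSet_nodup hf r
  have hfB : ∀ b ∈ betaSet f r, b < r + s := betaSet_lt hf hs
  have hB' : betaSet (conj f) s = (Multiset.range (r + s) - betaSet f r).map (fun x => r + s - 1 - x) := conj_betaSet_eq hf hr hs
  have hKnd : (coreBeta e (betaSet f r)).Nodup := coreBeta_nodup he0 _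
  have hKlt : ∀ x ∈ coreBeta e (betaSet f r), x < r + s := mem_coreBeta_lt he0 hndB hfB
  have hKcard : Multiset.card (coreBeta e (betaSet f r)) = r := by
    rw [coreBeta_card he0, betaSet_card]
  have hkpart : IsPartition (partOfBeta (coreBeta e (betaSet f r))) := partOfBeta_isPartition hKnd
  have hkbeta : betaSet (partOfBeta (coreBeta e (betaSet f r))) r = coreBeta e (betaSet f r) := by
    have h := betaSet_partOfBeta hKnd
    rw [hKcard] at h
    exact h
  have hk0 : (partOfBeta (coreBeta e (betaSet f r))) 0 ≤ s := by
    have h := partOfBeta_head_bound hKnd hKlt (by rw [hKcard]; omega)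
    rw [hKcard] at h
    omega
  have hkc0 : conj (partOfBeta (coreBeta e (betaSet f r))) 0 ≤ r :=
    conj_zero_le hkpart (fun i hi => partOfBeta_zero (by rw [hKcard]; exact hi))
  have hkB' : betaSet (conj (partOfBeta (coreBeta e (betaSet f r)))) s = (Multiset.range (r + s) - coreBeta e (betaSet f r)).map (fun x => r + s - 1 - x) := by
    have h := conj_betaSet_eq hkpart hkc0 hk0
    rw [hkbeta] at h
    exact h
  have hdlt : (r + k) % e < e := Nat.mod_lt _ he0
  have hd'eq : (s + (e - 1 - k)) % e = (r + s + e - 1 - (r + k) % e) % e := by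
    rw [mod_sub_mod (show r + k ≤ r + s + e - 1 by omega)]
    congr 1
    omega
  have hkey := slot_key (e := e) (ρ := (r + k) % e) hdlt (r + s)
  have hcM : runnerCount e ((r + k) % e) (betaSet f r) ≤ slotM e (r + s) ((r + k) % e) := runnerCount_le_slotM he0 hndB hfB hdlt
  have hA1 := runnerCount_compl (n := r + s) he0 hndB hfB hdlt
  have hA2 := runnerCount_compl (n := r + s) he0 hKnd hKlt hdlt
  have hA3 := runnerCount_coreBeta he0 (betaSet f r) hdlt
  have hmce : runnerCount e ((r + k) % e) (betaSet f r) * e ≤ slotM e (r + s) ((r + k) % e) * e :=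
    (mul_le_mul_right_iff' he0).mpr hcM
  have hTle : (r + k) % e + runnerCount e ((r + k) % e) (betaSet f r) * e ≤ r + s + e - 1 := by omega
  have hT'K : (r + s + e - 1 - (r + k) % e) % e + (slotM e (r + s) ((r + k) % e) - runnerCount e ((r + k) % e) (betaSet f r)) * e = r + s + e - 1 - ((r + k) % e + runnerCount e ((r + k) % e) (betaSet f r) * e) := by
    have h1 : (slotM e (r + s) ((r + k) % e) - runnerCount e ((r + k) % e) (betaSet f r)) * e + runnerCount e ((r + k) % e) (betaSet f r) * e = slotM e (r + s) ((r + k) % e) * e := by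
      rw [← Nat.add_mul, Nat.sub_add_cancel hcM]
    omega
  have hiff2 := kEmpty_iff_hiC he0 (e - 1 - k) s (conj f)
  rw [hd'eq, hB', hA1] at hiff2
  have hcompT := hiC_compl_at_threshold (n := r + s) he0 hndB hfB hdlt
  have part1 : KEmpty e k r f ↔ KEmpty e (e - 1 - k) s (conj f) := by
    rw [kEmpty_iff_hiC he0 k r f, hiff2, hT'K, hcompT]
  refine ⟨part1, fun hKE => ?_⟩
  have hvT : hiC e (betaSet f r) ((r + k) % e + runnerCount e ((r + k) % e) (betaSet f r) * e) = 0 := (kEmpty_iff_hiC he0 k r f).mp hKE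
  have hfBN : ∀ b ∈ betaSet f r, b < r + s + e := fun b hb => by
    have := hfB b hb; omega
  have hB'N : ∀ b ∈ betaSet (conj f) s, b < r + s + e := by
    rw [hB']
    intro b hb
    have := compl_lt _ b hb
    omega
  have hkN : ∀ b ∈ betaSet (partOfBeta (coreBeta e (betaSet f r))) r, b < r + s + e := by
    rw [hkbeta]
    intro b hb
    have := hKlt b hb
    omega
  have hk'N : ∀ b ∈ betaSet (conj (partOfBeta (coreBeta e (betaSet f r)))) s, b < r + s + e := by
    rw [hkB']
    intro b hb
    have := compl_lt _ b hb
    omega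
  rw [lk_eq he0 k r f hfBN, lk_eq he0 (e - 1 - k) s (conj f) hB'N,
    lk_eq he0 k r (partOfBeta (coreBeta e (betaSet f r))) hkN, lk_eq he0 (e - 1 - k) s (conj (partOfBeta (coreBeta e (betaSet f r)))) hk'N,
    eWeight_eq he0 hndB hfB]
  simp only [hd'eq, hB', hkB', hkbeta, hA1, hA2, hA3]
  -- now pure sum manipulation
  have hTmod : ((r + k) % e + runnerCount e ((r + k) % e) (betaSet f r) * e) % e = (r + k) % e := by
    rw [Nat.add_mul_mod_self_right, Nat.mod_eq_of_lt hdlt]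
  have hTdiv : ((r + k) % e + runnerCount e ((r + k) % e) (betaSet f r) * e) / e = runnerCount e ((r + k) % e) (betaSet f r) := by
    rw [Nat.add_mul_div_right _ _ he0, Nat.div_eq_of_lt hdlt, Nat.zero_add]
  have hvT0 : (min (((r + k) % e + runnerCount e ((r + k) % e) (betaSet f r) * e) / e) (runnerCount e (((r + k) % e + runnerCount e ((r + k) % e) (betaSet f r) * e) % e) (betaSet f r)) - loC e (betaSet f r) ((r + k) % e + runnerCount e ((r + k) % e) (betaSet f r) * e)) = 0 := by
    have h1 := hiC_eq_sub e (betaSet f r) ((r + k) % e + runnerCount e ((r + k) % e) (betaSet f r) * e)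
    rw [hTmod] at h1
    have h2 := loC_le_runner e (betaSet f r) ((r + k) % e + runnerCount e ((r + k) % e) (betaSet f r) * e)
    rw [hTmod] at h2
    rw [hTdiv, hTmod]
    omega
  have h1 : (∑ z ∈ Finset.range (r + s + e), if (r + k) % e + runnerCount e ((r + k) % e) (betaSet f r) * e < z then hiC e (betaSet f r) z else 0)
      = (∑ z ∈ Finset.range (r + s + e), if (r + k) % e + runnerCount e ((r + k) % e) (betaSet f r) * e < z then hiC e (coreBeta e (betaSet f r)) z else 0)
        + (∑ z ∈ Finset.range (r + s + e), if (r + k) % e + runnerCount e ((r + k) % e) (betaSet f r) * e < z then (min (z / e) (runnerCount e (z % e) (betaSet f r)) - loC e (betaSet f r) z) else 0) := by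
    rw [← Finset.sum_add_distrib]
    refine Finset.sum_congr rfl fun z _ => ?_
    by_cases h : (r + k) % e + runnerCount e ((r + k) % e) (betaSet f r) * e < z
    · rw [if_pos h, if_pos h, if_pos h]
      exact pointwise_v1 he0 hndB z
    · rw [if_neg h, if_neg h, if_neg h]
  have h2 : (∑ z ∈ Finset.range (r + s + e), if (r + s + e - 1 - (r + k) % e) % e + (slotM e (r + s) ((r + k) % e) - runnerCount e ((r + k) % e) (betaSet f r)) * e < z then hiC e ((Multiset.range (r + s) - betaSet f r).map (fun x => r + s - 1 - x)) z else 0)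
      = (∑ z ∈ Finset.range (r + s + e),
            ((if z < (r + k) % e + runnerCount e ((r + k) % e) (betaSet f r) * e then hiC e ((Multiset.range (r + s) - coreBeta e (betaSet f r)).map (fun x => r + s - 1 - x)) (r + s + e - 1 - z) else 0)
              + (if z < (r + k) % e + runnerCount e ((r + k) % e) (betaSet f r) * e then (min (z / e) (runnerCount e (z % e) (betaSet f r)) - loC e (betaSet f r) z) else 0))) := by
    rw [← Finset.sum_range_reflect
      (fun z => if (r + s + e - 1 - (r + k) % e) % e + (slotM e (r + s) ((r + k) % e) - runnerCount e ((r + k) % e) (betaSet f r)) * e < z then hiC e ((Multiset.range (r + s) - betaSet f r).map (fun x => r + s - 1 - x)) z else 0) (r + s + e)]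
    refine Finset.sum_congr rfl fun z hz => ?_
    rw [Finset.mem_range] at hz
    by_cases hzT : z < (r + k) % e + runnerCount e ((r + k) % e) (betaSet f r) * e
    · rw [if_pos (show (r + s + e - 1 - (r + k) % e) % e + (slotM e (r + s) ((r + k) % e) - runnerCount e ((r + k) % e) (betaSet f r)) * e < r + s + e - 1 - z by omega), if_pos hzT, if_pos hzT]
      exact pointwise_v2 he0 hndB hfB (by omega)
    · rw [if_neg (show ¬ (r + s + e - 1 - (r + k) % e) % e + (slotM e (r + s) ((r + k) % e) - runnerCount e ((r + k) % e) (betaSet f r)) * e < r + s + e - 1 - z by omega), if_neg hzT, if_neg hzT]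
  have h2b : (∑ z ∈ Finset.range (r + s + e),
        if z < (r + k) % e + runnerCount e ((r + k) % e) (betaSet f r) * e then hiC e ((Multiset.range (r + s) - coreBeta e (betaSet f r)).map (fun x => r + s - 1 - x)) (r + s + e - 1 - z) else 0)
      = ∑ z ∈ Finset.range (r + s + e), if (r + s + e - 1 - (r + k) % e) % e + (slotM e (r + s) ((r + k) % e) - runnerCount e ((r + k) % e) (betaSet f r)) * e < z then hiC e ((Multiset.range (r + s) - coreBeta e (betaSet f r)).map (fun x => r + s - 1 - x)) z else 0 := by
    rw [← Finset.sum_range_reflect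
      (fun z => if (r + s + e - 1 - (r + k) % e) % e + (slotM e (r + s) ((r + k) % e) - runnerCount e ((r + k) % e) (betaSet f r)) * e < z then hiC e ((Multiset.range (r + s) - coreBeta e (betaSet f r)).map (fun x => r + s - 1 - x)) z else 0) (r + s + e)]
    refine Finset.sum_congr rfl fun z hz => ?_
    rw [Finset.mem_range] at hz
    by_cases hzT : z < (r + k) % e + runnerCount e ((r + k) % e) (betaSet f r) * e
    · rw [if_pos hzT, if_pos (show (r + s + e - 1 - (r + k) % e) % e + (slotM e (r + s) ((r + k) % e) - runnerCount e ((r + k) % e) (betaSet f r)) * e < r + s + e - 1 - z by omega)]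
    · rw [if_neg hzT, if_neg (show ¬ (r + s + e - 1 - (r + k) % e) % e + (slotM e (r + s) ((r + k) % e) - runnerCount e ((r + k) % e) (betaSet f r)) * e < r + s + e - 1 - z by omega)]
  have hab : (∑ z ∈ Finset.range (r + s + e), if (r + k) % e + runnerCount e ((r + k) % e) (betaSet f r) * e < z then (min (z / e) (runnerCount e (z % e) (betaSet f r)) - loC e (betaSet f r) z) else 0)
        + (∑ z ∈ Finset.range (r + s + e), if z < (r + k) % e + runnerCount e ((r + k) % e) (betaSet f r) * e then (min (z / e) (runnerCount e (z % e) (betaSet f r)) - loC e (betaSet f r) z) else 0)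
      = ∑ z ∈ Finset.range (r + s + e), (min (z / e) (runnerCount e (z % e) (betaSet f r)) - loC e (betaSet f r) z) := by
    rw [← Finset.sum_add_distrib]
    refine Finset.sum_congr rfl fun z _ => ?_
    rcases lt_trichotomy z ((r + k) % e + runnerCount e ((r + k) % e) (betaSet f r) * e) with h | h | h
    · rw [if_neg (show ¬ ((r + k) % e + runnerCount e ((r + k) % e) (betaSet f r) * e < z) by omega), if_pos h, Nat.zero_add]
    · rw [if_neg (show ¬ ((r + k) % e + runnerCount e ((r + k) % e) (betaSet f r) * e < z) by omega), if_neg (show ¬ (z < (r + k) % e + runnerCount e ((r + k) % e) (betaSet f r) * e) by omega), h, hvT0]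
    · rw [if_pos h, if_neg (show ¬ (z < (r + k) % e + runnerCount e ((r + k) % e) (betaSet f r) * e) by omega), Nat.add_zero]
  rw [h1, h2, Finset.sum_add_distrib, h2b, ← hab]
  ring
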